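/- Let j, r ≥ 1 be integers and let K be a (possibly empty) composition; set N := j + r + |K|. Then the multiplicities satisfy m_{(j,r)⌢K} = −(1/(j+r)) · (binom(N,j))² · (j(N−j)/N) · m_{(r)⌢K}, where (j,r)⌢K and (r)⌢K denote the compositions of N and of N−j obtained by prepending (j,r), respectively (r), to K. -/

import Mathlib

open Finset

/-- The multiplicity `m_I ∈ ℚ` of a composition `I = (I_1, …, I_r)` of `N = I_1 + ⋯ + I_r`:
`m_I = -(-1)^r · N! · (N-1)! · ∏_{t=1}^r 1/(I_t!(I_t-1)!) · ∏_{t=1}^{r-1} 1/(I_t+I_{t+1})`. -/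
noncomputable def mult (I : List ℕ) : ℚ :=
  -(-1 : ℚ) ^ I.length * (Nat.factorial I.sum : ℚ) * (Nat.factorial (I.sum - 1) : ℚ)
    * (I.map fun a => ((Nat.factorial a : ℚ) * (Nat.factorial (a - 1) : ℚ))⁻¹).prod
    * ((I.zip I.tail).map fun p => ((p.1 + p.2 : ℕ) : ℚ)⁻¹).prod

/-- The quotient identity for multiplicities used in the proof of Theorem 2 of the paper:
with `N = j + r + |K|`,
`m_{(j,r)⌢K} = -(1/(j+r)) · binom(N,j)² · (j(N-j)/N) · m_{(r)⌢K}`. -/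
theorem mult_cons_ratio (j r : ℕ) (K : List ℕ) (hj : 1 ≤ j) (hr : 1 ≤ r)
    (hK : ∀ a ∈ K, 1 ≤ a) :
    mult (j :: r :: K) =
      -(1 / ((j : ℚ) + (r : ℚ))) * ((Nat.choose (j + r + K.sum) j : ℚ)) ^ 2
        * ((j : ℚ) * ((r + K.sum : ℕ) : ℚ) / ((j + r + K.sum : ℕ) : ℚ))
        * mult (r :: K) := by
  have hS : j + r + K.sum = j + (r + K.sum) := by ring
  set S := K.sum with hSdef
  -- naturals facts
  have hMpos : 0 < r + S := lt_of_lt_of_le hr (Nat.le_add_right r S)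
  have hNpos : 0 < j + (r + S) := lt_of_lt_of_le hj (Nat.le_add_right _ _)
  have hchoose : (Nat.choose (j + (r + S)) j) * j.factorial * (r + S).factorial
      = (j + (r + S)).factorial := by
    have := Nat.choose_mul_factorial_mul_factorial (Nat.le_add_right j (r + S))
    simpa [Nat.add_sub_cancel_left] using this
  have hfN : (j + (r + S)) * (j + (r + S) - 1).factorial = (j + (r + S)).factorial :=
    Nat.mul_factorial_pred hNpos.ne'
  have hfM : (r + S) * (r + S - 1).factorial = (r + S).factorial :=
    Nat.mul_factorial_pred hMpos.ne'
  have hfj : j * (j - 1).factorial = j.factorial := Nat.mul_factorial_pred (Nat.one_le_iff_ne_zero.mp hj)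
  -- cast versions
  have hchooseQ : (Nat.choose (j + (r + S)) j : ℚ) * (j.factorial : ℚ) * ((r + S).factorial : ℚ)
      = ((j + (r + S)).factorial : ℚ) := by exact_mod_cast hchoose
  have hfNQ : ((j : ℚ) + ((r : ℚ) + (S : ℚ))) * ((j + (r + S) - 1).factorial : ℚ)
      = ((j + (r + S)).factorial : ℚ) := by exact_mod_cast hfN
  have hfMQ : ((r : ℚ) + (S : ℚ)) * ((r + S - 1).factorial : ℚ)
      = ((r + S).factorial : ℚ) := by exact_mod_cast hfM
  have hfjQ : (j : ℚ) * ((j - 1).factorial : ℚ) = (j.factorial : ℚ) := by exact_mod_cast hfj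
  have hjQ : (0:ℚ) < (j:ℚ) := by exact_mod_cast hj
  have hMQ : (0:ℚ) < (r:ℚ) + (S:ℚ) := by exact_mod_cast hMpos
  have hNQ : (0:ℚ) < (j:ℚ) + ((r:ℚ) + (S:ℚ)) := by positivity
  have hjrQ : (0:ℚ) < (j:ℚ) + (r:ℚ) := by
    have : (0:ℚ) < (r:ℚ) := by exact_mod_cast hr
    positivity
  have hfac : ∀ n : ℕ, ((n.factorial : ℚ)) ≠ 0 := fun n => by
    exact_mod_cast n.factorial_ne_zero
  simp only [mult, List.sum_cons, List.length_cons, List.map_cons, List.prod_cons,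
    List.tail_cons, List.zip_cons_cons, hS, Nat.cast_add, Nat.cast_mul, ← hSdef]
  have hc : (Nat.choose (j + (r + S)) j : ℚ)
      = ((j:ℚ) + ((r:ℚ) + (S:ℚ))) * ((j + (r + S) - 1).factorial : ℚ)
        / (((j:ℚ) * ((j - 1).factorial : ℚ)) * (((r:ℚ) + (S:ℚ)) * ((r + S - 1).factorial : ℚ))) := by
    rw [hfjQ, hfMQ, hfNQ]
    field_simp
    linarith [hchooseQ]
  rw [hc, ← hfMQ, ← hfjQ]
  have h1 : ((j - 1).factorial : ℚ) ≠ 0 := hfac _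
  have h2 : ((r + S - 1).factorial : ℚ) ≠ 0 := hfac _
  have h3 : ((j + (r + S) - 1).factorial : ℚ) ≠ 0 := hfac _
  field_simp
  rw [← hfNQ]
  ring
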